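/- arXiv:2001.05147 — 3 statements merged into one kernel-verified Lean document; each statement's English description precedes it below -/
import Mathlib

section
/- The Grunsky coefficients associated with any sequence (a_k)_{k≥1} of complex numbers satisfy the symmetry relation k·c_{m,k} = m·c_{k,m} for all m, k ≥ 1; in particular c_{1,m} = a_m for all m ≥ 1. -/
/-- The Grunsky coefficients `c_{m,k}` associated with a sequence `a : ℕ → ℂ`
(the relevant values of `a` are `a 1, a 2, …`), defined by the recursion
`c_{m,1} = m·a_m` and
`c_{m,k+1} = c_{m+1,k} − a_{m+k} + ∑_{s=1}^{m−1} a_{m−s}·c_{s,k} − ∑_{s=1}^{k−1} a_{k−s}·c_{m,s}`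
for `m, k ≥ 1` (empty sums are `0`).  The value for second index `0` is irrelevant
and set to `0`. -/
noncomputable def grunsky (a : ℕ → ℂ) : ℕ → ℕ → ℂ
  | _, 0 => 0
  | m, 1 => (m : ℂ) * a m
  | m, (k + 2) =>
      grunsky a (m + 1) (k + 1) - a (m + (k + 1)) +
        ∑ s ∈ Finset.Icc 1 (m - 1), a (m - s) * grunsky a s (k + 1) -
        ∑ s ∈ (Finset.Icc 1 k).attach, a (k + 1 - s.1) * grunsky a m s.1
  termination_by _ k => k
  decreasing_by
    · omega
    · omega
    · have hs := s.2
      rw [Finset.mem_Icc] at hs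
      omega

open PowerSeries Finset

namespace GrunskyAux

variable (a : ℕ → ℂ)

/-- `As = ∑_{n≥0} a_{n+1} X^n`. -/
noncomputable def As : ℂ⟦X⟧ := PowerSeries.mk fun n => a (n+1)

/-- `G = 1 + X^2·As`, representing `z·g(z)` where `g(z) = 1/z + ∑_{j≥1} a_j z^j`. -/
noncomputable def G : ℂ⟦X⟧ := 1 + X^2 * As a

theorem coeff_G (n : ℕ) :
    (coeff n) (G a) = if n = 0 then 1 else if n = 1 then 0 else a (n-1) := by
  rcases n with _ | _ | n
  · simp [G]
  · simp [G, coeff_one, PowerSeries.coeff_X_pow_mul']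
  · have h2 : (coeff (n+2)) (X^2 * As a) = coeff n (As a) := by
      simpa using PowerSeries.coeff_X_pow_mul (As a) 2 n
    rw [show n+1+1 = n+2 from rfl]
    simp only [G, map_add, coeff_one, h2, As, coeff_mk]
    simp

/-- `X^N`-normalized polynomial-in-`g` representation. -/
def IsRep (u : ℂ⟦X⟧) (N : ℕ) : Prop :=
  ∃ φ : ℕ → ℂ, u = ∑ i ∈ Finset.range (N+1), φ i • ((G a)^i * X^(N-i))

theorem IsRep.sub {u v : ℂ⟦X⟧} {N : ℕ} (hu : IsRep a u N) (hv : IsRep a v N) :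
    IsRep a (u - v) N := by
  obtain ⟨φ, rfl⟩ := hu; obtain ⟨ψ, rfl⟩ := hv
  exact ⟨φ - ψ, by rw [← Finset.sum_sub_distrib]; simp [sub_smul]⟩

theorem IsRep.smul {u : ℂ⟦X⟧} {N : ℕ} (c : ℂ) (hu : IsRep a u N) :
    IsRep a (c • u) N := by
  obtain ⟨φ, rfl⟩ := hu
  exact ⟨c • φ, by rw [Finset.smul_sum]; simp [smul_smul]⟩

theorem IsRep.sum {ι : Type*} (s : Finset ι) (f : ι → ℂ⟦X⟧) {N : ℕ}
    (h : ∀ i ∈ s, IsRep a (f i) N) : IsRep a (∑ i ∈ s, f i) N := by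
  classical
  induction s using Finset.induction_on with
  | empty => exact ⟨0, by simp⟩
  | @insert x s' hx ih =>
    rw [Finset.sum_insert hx]
    obtain ⟨φ, hφ⟩ := h x (by simp)
    obtain ⟨ψ, hψ⟩ := ih (fun i hi => h i (by simp [hi]))
    exact ⟨φ + ψ, by rw [hφ, hψ, ← Finset.sum_add_distrib]; simp [add_smul]⟩

theorem IsRep.Xpow (N : ℕ) : IsRep a (X^N) N := by
  refine ⟨fun i => if i = 0 then 1 else 0, ?_⟩
  rw [Finset.sum_eq_single 0] <;> simp
  intro i _ hi; simp [hi]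

theorem IsRep.X_mul {u : ℂ⟦X⟧} {N : ℕ} (t : ℕ) (hu : IsRep a u N) :
    IsRep a (X^t * u) (N+t) := by
  obtain ⟨φ, rfl⟩ := hu
  refine ⟨fun i => if i ≤ N then φ i else 0, ?_⟩
  rw [Finset.mul_sum]
  symm
  rw [← Finset.sum_subset (Finset.range_subset_range.2 (by omega : N+1 ≤ N+t+1))
      (fun i _ hi => by
        rw [Finset.mem_range] at hi
        beta_reduce
        rw [if_neg (by omega : ¬ i ≤ N), zero_smul])]
  apply Finset.sum_congr rfl
  intro i hi
  rw [Finset.mem_range] at hi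
  beta_reduce
  rw [if_pos (by omega : i ≤ N), mul_smul_comm]
  congr 1
  rw [show N + t - i = t + (N - i) from by omega, pow_add]
  ring

theorem IsRep.G_mul {u : ℂ⟦X⟧} {N : ℕ} (hu : IsRep a u N) :
    IsRep a (G a * u) (N+1) := by
  obtain ⟨φ, rfl⟩ := hu
  refine ⟨fun i => match i with | 0 => 0 | j+1 => φ j, ?_⟩
  symm
  rw [Finset.sum_range_succ']
  simp only [zero_smul, add_zero]
  rw [Finset.mul_sum]
  apply Finset.sum_congr rfl
  intro i hi
  rw [mul_smul_comm]
  congr 1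
  rw [show N + 1 - (i+1) = N - i from by omega, pow_succ]
  ring

/-- The sequence `W m = X^m·F_m(g)` where `F_m` are the Faber-type polynomials. -/
noncomputable def W : ℕ → ℂ⟦X⟧
  | 0 => 1
  | 1 => G a
  | (m+2) => G a * W (m+1)
      - ∑ s ∈ (Finset.Icc 1 m).attach, a (m+1-s.1) • (X^(m+2-s.1) * W s.1)
      - ((m+2 : ℂ) * a (m+1)) • X^(m+2)
  termination_by m => m
  decreasing_by
    · omega
    · have hs := s.2; rw [Finset.mem_Icc] at hs; omega

theorem W_succ (m : ℕ) (hm : 1 ≤ m) :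
    W a (m+1) = G a * W a m
      - ∑ s ∈ Finset.Icc 1 (m-1), a (m-s) • (X^(m+1-s) * W a s)
      - ((m+1 : ℂ) * a m) • X^(m+1) := by
  obtain ⟨n, rfl⟩ : ∃ n, m = n + 1 := ⟨m-1, by omega⟩
  rw [show n+1+1 = n+2 from rfl, W]
  rw [Finset.sum_attach (Finset.Icc 1 n) (fun s => a (n+1-s) • (X^(n+2-s) * W a s))]
  simp only [Nat.add_sub_cancel]
  push_cast
  ring_nf

theorem coeff_mul_range (u v : ℂ⟦X⟧) (n : ℕ) :
    coeff n (u*v) = ∑ p ∈ Finset.range (n+1), coeff p u * coeff (n-p) v := by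
  rw [PowerSeries.coeff_mul, Finset.Nat.sum_antidiagonal_eq_sum_range_succ_mk]

theorem coeff_G_mul (u : ℂ⟦X⟧) (n : ℕ) :
    coeff n (G a * u)
      = coeff n u + ∑ q ∈ Finset.range (n-1), a (n-1-q) * coeff q u := by
  have hG : G a * u = u + X^2 * (As a * u) := by rw [G]; ring
  rw [hG, map_add, PowerSeries.coeff_X_pow_mul']
  congr 1
  rcases n with _ | _ | n
  · simp
  · simp
  · rw [if_pos (by omega : 2 ≤ n+2), show n+2-2 = n from rfl]
    rw [PowerSeries.coeff_mul, Finset.Nat.sum_antidiagonal_eq_sum_range_succ_mk]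
    rw [show n+2-1 = n+1 from rfl]
    rw [← Finset.sum_range_reflect]
    apply Finset.sum_congr rfl
    intro q hq
    rw [Finset.mem_range] at hq
    simp only [As, coeff_mk]
    rw [show n.succ - 1 - q = n - q from by omega, show n - (n-q) = q from by omega,
      show n+1-q = n-q+1 from by omega]

theorem resG (n : ℕ) :
    coeff n ((G a)^n * (d⁄dX ℂ) (G a)) = coeff (n+1) ((G a)^(n+1)) := by
  have h := Derivation.leibniz_pow (d⁄dX ℂ) (a := G a) (n+1)
  have h2 := congrArg (coeff n) h
  rw [coeff_derivative] at h2
  simp only [Nat.add_sub_cancel, nsmul_eq_mul, smul_eq_mul, map_mul, map_natCast] at h2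
  have h3 : (coeff n) ((↑(n+1) : ℂ⟦X⟧) * ((G a)^n * (d⁄dX ℂ) (G a)))
      = (n+1 : ℂ) * coeff n ((G a)^n * (d⁄dX ℂ) (G a)) := by
    push_cast
    rw [show ((n:ℂ⟦X⟧) + 1) = C ((n:ℂ)+1) from by push_cast; simp, coeff_C_mul]
  rw [h3] at h2
  have hne : ((n:ℂ)+1) ≠ 0 := Nat.cast_add_one_ne_zero n
  apply mul_left_cancel₀ hne
  rw [← h2]; ring

theorem term_core {m k : ℕ} (hm1 : 1 ≤ m) (i j : ℕ) (him : i ≤ m) (hjk : j ≤ k) :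
    coeff (m+k-1) ((d⁄dX ℂ) ((G a)^i * X^(m-i)) * ((G a)^j * X^(k-j)))
      = (m : ℂ) * coeff (m+k) ((G a)^i * X^(m-i) * ((G a)^j * X^(k-j))) := by
  have hR : (G a)^i * X^(m-i) * ((G a)^j * X^(k-j))
      = (G a)^(i+j) * X^((m-i)+(k-j)) := by
    rw [pow_add, pow_add]; ring
  have hRc : coeff (m+k) ((G a)^i * X^(m-i) * ((G a)^j * X^(k-j)))
      = coeff (i+j) ((G a)^(i+j)) := by
    have harith : m + k - (m - i + (k - j)) = i + j := by omega
    rw [hR, PowerSeries.coeff_mul_X_pow', if_pos (by omega : m - i + (k - j) ≤ m + k), harith]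
  rw [hRc]
  have hcnm : ∀ (n : ℕ) (u : ℂ⟦X⟧) (d : ℕ),
      coeff d ((n:ℂ⟦X⟧) * u) = (n : ℂ) * coeff d u := by
    intro n u d
    rw [← map_natCast (PowerSeries.C (R := ℂ)) n, coeff_C_mul]
  rw [Derivation.leibniz, Derivation.leibniz_pow, Derivation.leibniz_pow, derivative_X]
  simp only [smul_eq_mul, nsmul_eq_mul, mul_one]
  rw [add_mul, map_add]
  have h2nd : coeff (m+k-1) (X^(m-i) * ((i:ℂ⟦X⟧) * ((G a)^(i-1) * (d⁄dX ℂ) (G a))) * ((G a)^j * X^(k-j)))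
      = (i : ℂ) * coeff (i+j) ((G a)^(i+j)) := by
    rcases Nat.eq_zero_or_pos i with hi | hi
    · subst hi; simp
    · have hre : X^(m-i) * ((i:ℂ⟦X⟧) * ((G a)^(i-1) * (d⁄dX ℂ) (G a))) * ((G a)^j * X^(k-j))
          = (i:ℂ⟦X⟧) * (((G a)^(i+j-1) * (d⁄dX ℂ) (G a)) * X^((m-i)+(k-j))) := by
        rw [show i+j-1 = (i-1)+j from by omega, pow_add, pow_add]
        ring
      rw [hre, hcnm, PowerSeries.coeff_mul_X_pow', if_pos (by omega : (m-i)+(k-j) ≤ m+k-1),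
        show m+k-1 - ((m-i)+(k-j)) = i+j-1 from by omega,
        show i+j = (i+j-1)+1 from by omega, ← resG]
      rw [show i+j-1+1-1 = i+j-1 from by omega]
  rw [h2nd]
  have h1st : coeff (m+k-1) ((G a)^i * (((m-i : ℕ):ℂ⟦X⟧) * X^(m-i-1)) * ((G a)^j * X^(k-j)))
      = ((m-i : ℕ) : ℂ) * coeff (i+j) ((G a)^(i+j)) := by
    rcases Nat.lt_or_ge i m with hi | hi
    · have hre : (G a)^i * (((m-i : ℕ):ℂ⟦X⟧) * X^(m-i-1)) * ((G a)^j * X^(k-j))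
          = ((m-i : ℕ):ℂ⟦X⟧) * ((G a)^(i+j) * X^((m-i-1)+(k-j))) := by
        rw [pow_add]; ring
      rw [hre, hcnm, PowerSeries.coeff_mul_X_pow', if_pos (by omega : (m-i-1)+(k-j) ≤ m+k-1),
        show m+k-1 - ((m-i-1)+(k-j)) = i+j from by omega]
    · have hmi : m - i = 0 := by omega
      rw [hmi]
      simp
  rw [h1st]
  rw [show ((m-i:ℕ):ℂ) = (m:ℂ) - (i:ℂ) from by rw [Nat.cast_sub him]]
  ring

theorem sym_core {u v : ℂ⟦X⟧} {m k : ℕ} (hm1 : 1 ≤ m)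
    (hu : IsRep a u m) (hv : IsRep a v k) :
    coeff (m+k-1) ((d⁄dX ℂ) u * v) = (m:ℂ) * coeff (m+k) (u * v) := by
  obtain ⟨φ, rfl⟩ := hu; obtain ⟨ψ, rfl⟩ := hv
  rw [map_sum, Finset.sum_mul_sum, Finset.sum_mul_sum, map_sum, map_sum, Finset.mul_sum]
  apply Finset.sum_congr rfl
  intro i hi
  rw [map_sum (coeff (m+k)), map_sum (coeff (m+k-1)), Finset.mul_sum]
  apply Finset.sum_congr rfl
  intro j hj
  rw [Finset.mem_range] at hi hj
  rw [Derivation.map_smul, smul_mul_smul_comm, map_smul, smul_eq_mul,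
      smul_mul_smul_comm, map_smul, smul_eq_mul,
      term_core a hm1 i j (by omega) (by omega)]
  ring

theorem one_eq_G :
    (1 : ℂ⟦X⟧) = G a - X * (d⁄dX ℂ) (G a) + X^2 * (d⁄dX ℂ) (X * As a) := by
  ext n
  rw [map_add, map_sub, coeff_one]
  rcases n with _ | _ | n
  · simp [G]
  · rw [if_neg (by omega : ¬ (0+1 = 0))]
    rw [PowerSeries.coeff_succ_X_mul, coeff_derivative, PowerSeries.coeff_X_pow_mul',
      if_neg (by omega : ¬ 2 ≤ 1)]
    simp [G, PowerSeries.coeff_X_pow_mul']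
  · rw [if_neg (by omega : ¬ (n+2 = 0))]
    have h1 : coeff (n+2) (G a) = a (n+1) := by
      simp [G, PowerSeries.coeff_X_pow_mul', As, coeff_mk]
    have hXDG : coeff (n+2) (X * (d⁄dX ℂ) (G a)) = a (n+1) * (n+2) := by
      rw [PowerSeries.coeff_succ_X_mul, coeff_derivative, h1]
      push_cast; ring
    have hXDA : coeff (n+2) (X^2 * (d⁄dX ℂ) (X * As a)) = a (n+1) * (n+1) := by
      rw [PowerSeries.coeff_X_pow_mul', if_pos (by omega : 2 ≤ n+2), show n+2-2 = n from rfl,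
        coeff_derivative, PowerSeries.coeff_succ_X_mul]
      simp only [As, coeff_mk]
    rw [hXDG, hXDA, h1]
    try ring

theorem key_coeff {u : ℂ⟦X⟧} {m : ℕ} (hm : 1 ≤ m) (h0 : coeff 0 u = 1)
    (hj : ∀ j, 1 ≤ j → j ≤ m → coeff j u = 0) (hrep : IsRep a u m) :
    coeff (m+1) u = m * a m := by
  have hGd : coeff (m+1) (u * G a) = coeff m (u * (d⁄dX ℂ) (G a)) := by
    obtain ⟨φ, rfl⟩ := hrep
    rw [Finset.sum_mul, Finset.sum_mul, map_sum, map_sum]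
    apply Finset.sum_congr rfl
    intro i hi
    rw [Finset.mem_range] at hi
    rw [smul_mul_assoc, smul_mul_assoc, map_smul, map_smul, smul_eq_mul, smul_eq_mul]
    congr 1
    rw [show (G a)^i * X^(m-i) * G a = (G a)^(i+1) * X^(m-i) from by rw [pow_succ]; ring,
      show (G a)^i * X^(m-i) * (d⁄dX ℂ) (G a) = ((G a)^i * (d⁄dX ℂ) (G a)) * X^(m-i) from by ring,
      PowerSeries.coeff_mul_X_pow', PowerSeries.coeff_mul_X_pow',
      if_pos (by omega : m-i ≤ m+1), if_pos (by omega : m-i ≤ m),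
      show m+1-(m-i) = i+1 from by omega, show m-(m-i) = i from by omega, resG]
  have hDA : coeff (m-1) (u * (d⁄dX ℂ) (X * As a)) = m * a m := by
    rw [coeff_mul_range]
    rw [Finset.sum_eq_single 0]
    · rw [h0, Nat.sub_zero, coeff_derivative, PowerSeries.coeff_succ_X_mul]
      simp only [As, coeff_mk]
      rw [show m-1+1 = m from by omega]
      push_cast [Nat.cast_sub hm]
      ring
    · intro p hp hp0
      rw [Finset.mem_range] at hp
      rw [hj p (by omega) (by omega), zero_mul]
    · intro h
      exact absurd (Finset.mem_range.2 (by omega)) h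
  have hfin := congrArg (coeff (m+1)) (congrArg (u * ·) (one_eq_G a))
  simp only [mul_one] at hfin
  rw [mul_add, mul_sub] at hfin
  rw [map_add, map_sub] at hfin
  rw [show u * (X * (d⁄dX ℂ) (G a)) = X * (u * (d⁄dX ℂ) (G a)) from by ring,
      show u * (X^2 * (d⁄dX ℂ) (X * As a)) = X^2 * (u * (d⁄dX ℂ) (X * As a)) from by ring,
      PowerSeries.coeff_succ_X_mul, PowerSeries.coeff_X_pow_mul',
      if_pos (by omega : 2 ≤ m+1), show m+1-2 = m-1 from by omega, hGd, hDA] at hfin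
  rw [hfin]; ring

theorem shape_exists {u : ℂ⟦X⟧} {m : ℕ} (h0 : coeff 0 u = 1)
    (hj : ∀ j, 1 ≤ j → j ≤ m → coeff j u = 0) :
    u = 1 + X^(m+1) * (PowerSeries.mk fun t => coeff (m+1+t) u) := by
  ext n
  rw [map_add, PowerSeries.coeff_X_pow_mul']
  rcases Nat.lt_or_ge n (m+1) with hn | hn
  · rw [if_neg (by omega : ¬ (m+1 ≤ n))]
    rcases Nat.eq_zero_or_pos n with rfl | hn1
    · simp [h0]
    · rw [hj n hn1 (by omega), coeff_one, if_neg (by omega : ¬ n = 0)]; ring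
  · rw [if_pos hn, coeff_mk, show m+1+(n-(m+1)) = n from by omega,
      coeff_one, if_neg (by omega : ¬ n = 0)]
    ring

theorem main : ∀ m, 1 ≤ m →
    coeff 0 (W a m) = 1
    ∧ (∀ j, 1 ≤ j → j ≤ m → coeff j (W a m) = 0)
    ∧ IsRep a (W a m) m
    ∧ coeff (m+1) (W a m) = m * a m := by
  intro m
  induction m using Nat.strong_induction_on with
  | _ m IH =>
  intro hm
  rcases Nat.lt_or_ge m 2 with h2 | h2
  · have hm1 : m = 1 := by omega
    subst hm1
    have hW1 : W a 1 = G a := by rw [W]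
    refine ⟨by simp [hW1, coeff_G], ?_, ?_, ?_⟩
    · intro j hj1 hj2
      have : j = 1 := by omega
      subst this; simp [hW1, coeff_G]
    · refine ⟨fun i => if i = 1 then 1 else 0, ?_⟩
      rw [hW1, Finset.sum_range_succ, Finset.sum_range_one]
      norm_num
    · simp [hW1, coeff_G]
  · obtain ⟨M, rfl⟩ : ∃ M, m = M + 1 := ⟨m-1, by omega⟩
    have hM : 1 ≤ M := by omega
    obtain ⟨h0M, hjM, hrepM, hkeyM⟩ := IH M (by omega) hM
    have hWs := W_succ a M hM
    have hsum : ∀ j, j ≤ M+1 →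
        coeff j (∑ s ∈ Finset.Icc 1 (M-1), a (M-s) • (X^(M+1-s) * W a s))
        = if 2 ≤ j ∧ j ≤ M then a (j-1) else 0 := by
      intro j hj
      rw [map_sum]
      by_cases hcond : 2 ≤ j ∧ j ≤ M
      · rw [if_pos hcond]
        rw [Finset.sum_eq_single (M+1-j)]
        · rw [map_smul, smul_eq_mul, PowerSeries.coeff_X_pow_mul',
            if_pos (by omega : M+1-(M+1-j) ≤ j),
            show j - (M+1-(M+1-j)) = 0 from by omega,
            (IH (M+1-j) (by omega) (by omega)).1, mul_one,
            show M-(M+1-j) = j-1 from by omega]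
        · intro s hs hne
          rw [Finset.mem_Icc] at hs
          rw [map_smul, smul_eq_mul, PowerSeries.coeff_X_pow_mul']
          by_cases hle : M+1-s ≤ j
          · rw [if_pos hle,
              (IH s (by omega) (by omega)).2.1 (j-(M+1-s)) (by omega) (by omega), mul_zero]
          · rw [if_neg hle, mul_zero]
        · intro habs
          exact absurd (Finset.mem_Icc.2 (by omega)) habs
      · rw [if_neg hcond]
        apply Finset.sum_eq_zero
        intro s hs
        rw [Finset.mem_Icc] at hs
        rw [map_smul, smul_eq_mul, PowerSeries.coeff_X_pow_mul']
        by_cases hle : M+1-s ≤ j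
        · have hjM1 : j = M+1 := by omega
          rw [if_pos hle, show j - (M+1-s) = s from by omega,
            (IH s (by omega) (by omega)).2.1 s hs.1 le_rfl, mul_zero]
        · rw [if_neg hle, mul_zero]
    have hshape1 : ∀ j, j ≤ M+1 → coeff j (W a (M+1)) = if j = 0 then 1 else 0 := by
      intro j hj
      rw [hWs, map_sub, map_sub, coeff_G_mul, hsum j hj, map_smul, PowerSeries.coeff_X_pow,
        smul_eq_mul]
      have hr : ∑ q ∈ Finset.range (j-1), a (j-1-q) * coeff q (W a M)
          = if 2 ≤ j then a (j-1) else 0 := by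
        by_cases h2j : 2 ≤ j
        · rw [if_pos h2j, Finset.sum_eq_single 0]
          · rw [h0M, Nat.sub_zero, mul_one]
          · intro q hq hq0
            rw [Finset.mem_range] at hq
            rw [hjM q (by omega) (by omega), mul_zero]
          · intro habs; exact absurd (Finset.mem_range.2 (by omega)) habs
        · rw [if_neg h2j, show j - 1 = 0 from by omega]
          simp
      rw [hr]
      rcases Nat.eq_zero_or_pos j with rfl | hj1
      · norm_num [h0M]
      · rcases Nat.lt_or_ge j (M+1) with hjlt | hjge
        · rw [hjM j hj1 (by omega), if_neg (by omega : ¬ j = M+1),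
            if_neg (by omega : ¬ j = 0)]
          by_cases h2j : 2 ≤ j
          · rw [if_pos h2j, if_pos ⟨h2j, by omega⟩]; ring
          · rw [if_neg h2j, if_neg (by omega : ¬ (2 ≤ j ∧ j ≤ M))]; ring
        · have : j = M+1 := by omega
          subst this
          rw [hkeyM, if_pos (by omega : 2 ≤ M+1), if_neg (by omega : ¬ (2 ≤ M+1 ∧ M+1 ≤ M)),
            if_pos rfl, if_neg (by omega : ¬ M+1 = 0)]
          push_cast; ring
    have h0' : coeff 0 (W a (M+1)) = 1 := by
      have := hshape1 0 (by omega); simpa using this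
    have hj' : ∀ j, 1 ≤ j → j ≤ M+1 → coeff j (W a (M+1)) = 0 := by
      intro j h1 h2
      have := hshape1 j h2; rwa [if_neg (by omega)] at this
    have hrep' : IsRep a (W a (M+1)) (M+1) := by
      rw [hWs]
      refine IsRep.sub a (IsRep.sub a (IsRep.G_mul a hrepM) ?_) ?_
      · refine IsRep.sum a _ _ ?_
        intro s hs
        rw [Finset.mem_Icc] at hs
        refine IsRep.smul a _ ?_
        have := IsRep.X_mul a (M+1-s) (IH s (by omega) (by omega)).2.2.1
        rwa [show s + (M+1-s) = M+1 from by omega] at this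
      · exact IsRep.smul a _ (IsRep.Xpow a (M+1))
    exact ⟨h0', hj', hrep', key_coeff a (by omega) h0' hj' hrep'⟩

theorem grunsky_one (m : ℕ) : grunsky a m 1 = m * a m := by rw [grunsky]

theorem grunsky_succ_succ (m k : ℕ) :
    grunsky a m (k+2) = grunsky a (m+1) (k+1) - a (m+(k+1))
      + ∑ s ∈ Finset.Icc 1 (m-1), a (m-s) * grunsky a s (k+1)
      - ∑ s ∈ Finset.Icc 1 k, a (k+1-s) * grunsky a m s := by
  rw [grunsky]
  rw [Finset.sum_attach (Finset.Icc 1 k) (fun s => a (k+1-s) * grunsky a m s)]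

theorem chat_rec (m k : ℕ) (hm : 1 ≤ m) :
    coeff (m+(k+2)) (W a m)
      = coeff ((m+1)+(k+1)) (W a (m+1)) - a (m+(k+1))
        + ∑ s ∈ Finset.Icc 1 (m-1), a (m-s) * coeff (s+(k+1)) (W a s)
        - ∑ s ∈ Finset.Icc 1 k, a (k+1-s) * coeff (m+s) (W a m) := by
  obtain ⟨h0M, hjM, -, -⟩ := main a m hm
  have h := congrArg (coeff (m+k+2)) (W_succ a m hm)
  rw [map_sub, map_sub, coeff_G_mul, map_sum, map_smul, smul_eq_mul,
    PowerSeries.coeff_X_pow, if_neg (by omega : ¬ m+k+2 = m+1), mul_zero, sub_zero] at h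
  have hsub : ∀ s ∈ Finset.Icc 1 (m-1),
      coeff (m+k+2) (a (m-s) • (X^(m+1-s) * W a s))
        = a (m-s) * coeff (s+(k+1)) (W a s) := by
    intro s hs
    rw [Finset.mem_Icc] at hs
    rw [map_smul, smul_eq_mul, PowerSeries.coeff_X_pow_mul',
      if_pos (by omega : m+1-s ≤ m+k+2), show m+k+2-(m+1-s) = s+(k+1) from by omega]
  rw [Finset.sum_congr rfl hsub] at h
  have hsplit : ∑ q ∈ Finset.range (m+k+2-1), a (m+k+2-1-q) * coeff q (W a m)
      = a (m+(k+1)) + ∑ s ∈ Finset.Icc 1 k, a (k+1-s) * coeff (m+s) (W a m) := by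
    rw [show m+k+2-1 = m+k+1 from by omega, Finset.range_eq_Ico,
      ← Finset.sum_Ico_consecutive _ (by omega : 0 ≤ m+1) (by omega : m+1 ≤ m+k+1)]
    congr 1
    · rw [← Finset.range_eq_Ico, Finset.sum_eq_single 0]
      · rw [h0M, Nat.sub_zero, mul_one, show m+k+1 = m+(k+1) from by omega]
      · intro q hq hq0
        rw [Finset.mem_range] at hq
        rw [hjM q (by omega) (by omega), mul_zero]
      · intro habs; exact absurd (Finset.mem_range.2 (by omega)) habs
    · rw [Finset.sum_Ico_eq_sum_range, show m+k+1-(m+1) = k from by omega,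
        show Finset.Icc 1 k = Finset.Ico 1 (k+1) from by rw [Finset.Ico_add_one_right_eq_Icc],
        Finset.sum_Ico_eq_sum_range, show k+1-1 = k from by omega]
      apply Finset.sum_congr rfl
      intro i hi
      rw [Finset.mem_range] at hi
      rw [show m+k+1-(m+1+i) = k-i from by omega, show k+1-(1+i) = k-i from by omega,
        show m+(1+i) = m+1+i from by omega]
  rw [hsplit] at h
  rw [show m+(k+2) = m+k+2 from by omega, show (m+1)+(k+1) = m+k+2 from by omega]
  linear_combination -h

theorem grunsky_eq : ∀ k, 1 ≤ k → ∀ m, 1 ≤ m → grunsky a m k = coeff (m+k) (W a m) := by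
  intro k
  induction k using Nat.strong_induction_on with
  | _ k IHk =>
  intro hk m hm
  rcases Nat.lt_or_ge k 2 with h2 | h2
  · have : k = 1 := by omega
    subst this
    rw [grunsky_one, (main a m hm).2.2.2]
  · obtain ⟨K, rfl⟩ : ∃ K, k = K+2 := ⟨k-2, by omega⟩
    have e1 : ∑ s ∈ Finset.Icc 1 (m-1), a (m-s) * grunsky a s (K+1)
        = ∑ s ∈ Finset.Icc 1 (m-1), a (m-s) * coeff (s+(K+1)) (W a s) := by
      apply Finset.sum_congr rfl
      intro s hs
      rw [Finset.mem_Icc] at hs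
      rw [IHk (K+1) (by omega) (by omega) s (by omega)]
    have e2 : ∑ s ∈ Finset.Icc 1 K, a (K+1-s) * grunsky a m s
        = ∑ s ∈ Finset.Icc 1 K, a (K+1-s) * coeff (m+s) (W a m) := by
      apply Finset.sum_congr rfl
      intro s hs
      rw [Finset.mem_Icc] at hs
      rw [IHk s (by omega) (by omega) m hm]
    rw [grunsky_succ_succ, e1, e2, IHk (K+1) (by omega) (by omega) (m+1) (by omega)]
    exact (chat_rec a m K hm).symm

theorem csym (m k : ℕ) (hm : 1 ≤ m) (hk : 1 ≤ k) :
    (k:ℂ) * coeff (m+k) (W a m) = (m:ℂ) * coeff (k+m) (W a k) := by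
  obtain ⟨h0m, hjm, hrepm, -⟩ := main a m hm
  obtain ⟨h0k, hjk, hrepk, -⟩ := main a k hk
  set Tm : ℂ⟦X⟧ := PowerSeries.mk fun t => coeff (m+1+t) (W a m) with hTmdef
  set Tk : ℂ⟦X⟧ := PowerSeries.mk fun t => coeff (k+1+t) (W a k) with hTkdef
  have hTm : W a m = 1 + X^(m+1) * Tm := shape_exists h0m hjm
  have hTk : W a k = 1 + X^(k+1) * Tk := shape_exists h0k hjk
  have hPm : ∀ n, m+1 ≤ n → coeff n (X^(m+1) * Tm) = coeff n (W a m) := by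
    intro n hn
    rw [PowerSeries.coeff_X_pow_mul', if_pos hn, hTmdef, coeff_mk,
      show m+1+(n-(m+1)) = n from by omega]
  have hPk : ∀ n, k+1 ≤ n → coeff n (X^(k+1) * Tk) = coeff n (W a k) := by
    intro n hn
    rw [PowerSeries.coeff_X_pow_mul', if_pos hn, hTkdef, coeff_mk,
      show k+1+(n-(k+1)) = n from by omega]
  have hP : coeff (m+k) (W a m * W a k)
      = coeff (m+k) (W a m) + coeff (k+m) (W a k) := by
    conv_lhs => rw [hTm, hTk]
    rw [show (1 + X^(m+1) * Tm) * (1 + X^(k+1) * Tk)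
        = 1 + X^(m+1) * Tm + X^(k+1) * Tk + X^((m+1)+(k+1)) * (Tm * Tk) from by
      rw [pow_add]; ring]
    rw [map_add, map_add, map_add, coeff_one, if_neg (by omega : ¬ m+k = 0),
      PowerSeries.coeff_X_pow_mul' (Tm * Tk), if_neg (by omega : ¬ (m+1)+(k+1) ≤ m+k),
      hPm (m+k) (by omega), hPk (m+k) (by omega), show m+k = k+m from by omega]
    ring
  have hcnm : ∀ (n : ℕ) (u : ℂ⟦X⟧) (d : ℕ),
      coeff d ((n:ℂ⟦X⟧) * u) = (n : ℂ) * coeff d u := by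
    intro n u d
    rw [← map_natCast (PowerSeries.C (R := ℂ)) n, coeff_C_mul]
  have hTmWk : ∀ n, n < k+1 → coeff n (Tm * W a k) = coeff (m+1+n) (W a m) := by
    intro n hn
    rw [hTk, mul_add, mul_one, map_add,
      show Tm * (X^(k+1) * Tk) = X^(k+1) * (Tm * Tk) from by ring,
      PowerSeries.coeff_X_pow_mul', if_neg (by omega : ¬ k+1 ≤ n), add_zero,
      hTmdef, coeff_mk]
  have hD : coeff (m+k-1) ((d⁄dX ℂ) (W a m) * W a k)
      = ((m:ℂ)+(k:ℂ)) * coeff (m+k) (W a m) := by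
    have hdW : (d⁄dX ℂ) (W a m)
        = X^(m+1) * (d⁄dX ℂ) Tm + ((m+1 : ℕ) : ℂ⟦X⟧) * (X^m * Tm) := by
      rw [hTm, map_add, Derivation.map_one_eq_zero, zero_add, Derivation.leibniz,
        Derivation.leibniz_pow, derivative_X]
      simp only [smul_eq_mul, nsmul_eq_mul, mul_one, show m+1-1 = m from rfl]
      push_cast
      ring
    have hB : coeff (m+k-1) (X^m * (Tm * W a k)) = coeff (m+k) (W a m) := by
      rw [PowerSeries.coeff_X_pow_mul', if_pos (by omega : m ≤ m+k-1),
        hTmWk (m+k-1-m) (by omega), show m+1+(m+k-1-m) = m+k from by omega]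
    have hA : coeff (m+k-1) (X^(m+1) * ((d⁄dX ℂ) Tm * W a k))
        = ((k:ℂ)-1) * coeff (m+k) (W a m) := by
      rcases Nat.lt_or_ge k 2 with hk2 | hk2
      · have hk1 : k = 1 := by omega
        subst hk1
        rw [PowerSeries.coeff_X_pow_mul', if_neg (by omega : ¬ m+1 ≤ m+1-1)]
        norm_num
      · rw [PowerSeries.coeff_X_pow_mul', if_pos (by omega : m+1 ≤ m+k-1),
          show m+k-1-(m+1) = k-2 from by omega]
        have h1 : coeff (k-2) ((d⁄dX ℂ) Tm * W a k) = coeff (k-2) ((d⁄dX ℂ) Tm) := by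
          rw [hTk, mul_add, mul_one, map_add,
            show (d⁄dX ℂ) Tm * (X^(k+1) * Tk) = X^(k+1) * ((d⁄dX ℂ) Tm * Tk) from by ring,
            PowerSeries.coeff_X_pow_mul', if_neg (by omega : ¬ k+1 ≤ k-2), add_zero]
        rw [h1, coeff_derivative, hTmdef, coeff_mk,
          show m+1+(k-2+1) = m+k from by omega]
        push_cast [Nat.cast_sub (by omega : 2 ≤ k)]
        ring
    rw [hdW, add_mul, map_add,
      show X^(m+1) * (d⁄dX ℂ) Tm * W a k = X^(m+1) * ((d⁄dX ℂ) Tm * W a k) from by ring,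
      show ((m+1 : ℕ) : ℂ⟦X⟧) * (X^m * Tm) * W a k
        = ((m+1 : ℕ) : ℂ⟦X⟧) * (X^m * (Tm * W a k)) from by ring,
      hcnm, hA, hB]
    push_cast
    ring
  have hsym := sym_core a hm hrepm hrepk
  rw [hD, hP] at hsym
  linear_combination hsym

end GrunskyAux

/-- The Grunsky coefficients associated with any sequence `(a_k)_{k≥1}`
of complex numbers satisfy the symmetry relation `k·c_{m,k} = m·c_{k,m}` for all
`m, k ≥ 1`; in particular `c_{1,m} = a_m` for all `m ≥ 1`. -/
theorem grunsky_symmetry (a : ℕ → ℂ) :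
    (∀ m k : ℕ, 1 ≤ m → 1 ≤ k →
      (k : ℂ) * grunsky a m k = (m : ℂ) * grunsky a k m) ∧
    (∀ m : ℕ, 1 ≤ m → grunsky a 1 m = a m) := by
  constructor
  · intro m k hm hk
    rw [GrunskyAux.grunsky_eq a k hk m hm, GrunskyAux.grunsky_eq a m hm k hk]
    exact GrunskyAux.csym a m k hm hk
  · intro m hm
    rw [GrunskyAux.grunsky_eq a m hm 1 le_rfl,
      show GrunskyAux.W a 1 = GrunskyAux.G a from by rw [GrunskyAux.W],
      GrunskyAux.coeff_G, if_neg (by omega : ¬ 1+m = 0), if_neg (by omega : ¬ 1+m = 1),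
      show 1+m-1 = m from by omega]
end

section
/- Let a_0, a_1 ∈ ℂ and consider the Faber polynomials F_m associated with the sequence (a_0, a_1, 0, 0, …) (i.e., a_k = 0 for k ≥ 2). Then for every m ≥ 1 and all u, v ∈ ℂ with u·v = a_1, one has F_m(a_0 + u + v) = u^m + v^m. In particular, for every w ∈ ℂ with w ≠ 0, F_m(w + a_0 + a_1/w) = w^m + (a_1/w)^m. -/
/-- The Faber polynomials associated with a sequence `a : ℕ → ℂ`, defined by the
recursion `F₀ = 1` and
`F_{m+1}(z) = z·F_m(z) − m·a_m − ∑_{k=0}^{m} a_k·F_{m−k}(z)`. -/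
noncomputable def faber (a : ℕ → ℂ) : ℕ → Polynomial ℂ
  | 0 => 1
  | m + 1 =>
      Polynomial.X * faber a m - Polynomial.C ((m : ℂ) * a m) -
        ∑ k ∈ Finset.range (m + 1), Polynomial.C (a k) * faber a (m - k)
  termination_by m => m
  decreasing_by all_goals omega

/-- The sequence `(a₀, a₁, 0, 0, …)` associated with the ellipse with exterior
conformal map `w ↦ w + a₀ + a₁/w`. -/
noncomputable def ellipseSeq (a₀ a₁ : ℂ) : ℕ → ℂ :=
  fun k => if k = 0 then a₀ else if k = 1 then a₁ else 0

lemma ellipse_sum (a₀ a₁ : ℂ) (m : ℕ) (hm : 1 ≤ m) (F : ℕ → Polynomial ℂ) :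
    ∑ k ∈ Finset.range (m + 1), Polynomial.C (ellipseSeq a₀ a₁ k) * F (m - k)
      = Polynomial.C a₀ * F m + Polynomial.C a₁ * F (m - 1) := by
  have h : ∀ k ∈ Finset.range (m + 1),
      Polynomial.C (ellipseSeq a₀ a₁ k) * F (m - k)
        = (if k = 0 then Polynomial.C a₀ * F m else 0)
          + (if k = 1 then Polynomial.C a₁ * F (m - 1) else 0) := by
    intro k _
    unfold ellipseSeq
    split_ifs with h1 h2 <;> simp [h1] <;> simp_all
  rw [Finset.sum_congr rfl h, Finset.sum_add_distrib,
    Finset.sum_ite_eq' _ 0, Finset.sum_ite_eq' _ 1]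
  simp [Finset.mem_range, Nat.lt_succ_iff, hm]
  exact fun h => absurd hm (by omega)

lemma faber_eval_aux (a₀ a₁ u v : ℂ) (huv : u * v = a₁) :
    ∀ m : ℕ, (faber (ellipseSeq a₀ a₁) (m + 1)).eval (a₀ + u + v) = u ^ (m + 1) + v ^ (m + 1)
      ∧ (faber (ellipseSeq a₀ a₁) (m + 2)).eval (a₀ + u + v) = u ^ (m + 2) + v ^ (m + 2) := by
  intro m
  induction m with
  | zero =>
    constructor
    · show (faber (ellipseSeq a₀ a₁) (0 + 1)).eval _ = _
      rw [faber]
      simp [faber, ellipseSeq]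
      ring
    · show (faber (ellipseSeq a₀ a₁) (1 + 1)).eval _ = _
      rw [faber, ellipse_sum a₀ a₁ 1 le_rfl]
      simp [faber, ellipseSeq]
      linear_combination 2 * huv
  | succ n ih =>
    obtain ⟨h1, h2⟩ := ih
    refine ⟨h2, ?_⟩
    show (faber (ellipseSeq a₀ a₁) (n + 2 + 1)).eval _ = _
    rw [faber, ellipse_sum a₀ a₁ (n + 2) (by omega)]
    have : ellipseSeq a₀ a₁ (n + 2) = 0 := by simp [ellipseSeq]
    have hn : n + 2 - 1 = n + 1 := by omega
    rw [hn]
    simp only [this, mul_zero, Polynomial.eval_sub, Polynomial.eval_mul, Polynomial.eval_X,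
      Polynomial.eval_C, Polynomial.eval_add, Polynomial.map_zero, Polynomial.eval_zero]
    rw [h1, h2]
    linear_combination (u ^ (n + 1) + v ^ (n + 1)) * huv

/-- For the Faber polynomials `F_m` associated with the sequence
`(a₀, a₁, 0, 0, …)`, for every `m ≥ 1` and all `u, v ∈ ℂ` with `u·v = a₁` one has
`F_m(a₀ + u + v) = u^m + v^m`; in particular, for every `w ≠ 0`,
`F_m(w + a₀ + a₁/w) = w^m + (a₁/w)^m`. -/
theorem faber_ellipse_eval (a₀ a₁ : ℂ) (m : ℕ) (hm : 1 ≤ m) :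
    (∀ u v : ℂ, u * v = a₁ →
      (faber (ellipseSeq a₀ a₁) m).eval (a₀ + u + v) = u ^ m + v ^ m) ∧
    (∀ w : ℂ, w ≠ 0 →
      (faber (ellipseSeq a₀ a₁) m).eval (w + a₀ + a₁ / w) = w ^ m + (a₁ / w) ^ m) := by
  obtain ⟨n, rfl⟩ : ∃ n, m = n + 1 := ⟨m - 1, by omega⟩
  have key : ∀ u v : ℂ, u * v = a₁ →
      (faber (ellipseSeq a₀ a₁) (n + 1)).eval (a₀ + u + v) = u ^ (n + 1) + v ^ (n + 1) :=
    fun u v huv => (faber_eval_aux a₀ a₁ u v huv n).1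
  refine ⟨key, fun w hw => ?_⟩
  have := key w (a₁ / w) (mul_div_cancel₀ a₁ hw)
  rwa [show a₀ + w + a₁ / w = w + a₀ + a₁ / w by ring] at this
end

section
/- Let λ ∈ ℝ with |λ| > 1/2, let γ > 0 and e_1 ∈ ℂ with |e_1| < γ², and define N₁ = 4π·e_1·(γ⁴ − |e_1|²)/(4λ²γ⁴ − |e_1|²) and N₂ = 8πλ·γ²·(γ⁴ − |e_1|²)/(4λ²γ⁴ − |e_1|²) (these are the first-order Faber polynomial polarization tensors F^{(1)}_{11} and F^{(2)}_{11} of the ellipse with exterior conformal map w ↦ w + e_0 + e_1/w on |w| > γ). Then |N₂|² − 4λ²|N₁|² ≠ 0, N₂ ≠ 0, and the ellipse parameters are recovered from (N₁, N₂) by the formulas γ² = (λ·N₂/(2π))·(|N₂|² − |N₁|²)/(|N₂|² − 4λ²|N₁|²) and e_1 = 2λγ²·N₁/N₂. -/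
/-- Let `λ ∈ ℝ` with `|λ| > 1/2`, `γ > 0` and `e₁ ∈ ℂ` with `|e₁| < γ²`.
Define `N₁ = 4π·e₁·(γ⁴ − |e₁|²)/(4λ²γ⁴ − |e₁|²)` and
`N₂ = 8πλ·γ²·(γ⁴ − |e₁|²)/(4λ²γ⁴ − |e₁|²)` (the first-order FPTs `F⁽¹⁾₁₁` and `F⁽²⁾₁₁`
of the ellipse with exterior conformal map `w ↦ w + e₀ + e₁/w` on `|w| > γ`).
Then `|N₂|² − 4λ²|N₁|² ≠ 0`, `N₂ ≠ 0`, and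
`γ² = (λ·N₂/(2π))·(|N₂|² − |N₁|²)/(|N₂|² − 4λ²|N₁|²)` and `e₁ = 2λγ²·N₁/N₂`. -/
theorem ellipse_parameters_from_first_FPTs
    (lam : ℝ) (hlam : 1 / 2 < |lam|)
    (γ : ℝ) (hγ : 0 < γ) (e₁ : ℂ) (he₁ : ‖e₁‖ < γ ^ 2)
    (N₁ N₂ : ℂ)
    (hN₁ : N₁ = 4 * Real.pi * e₁ * ((γ : ℂ) ^ 4 - (‖e₁‖ : ℂ) ^ 2) /
        (4 * (lam : ℂ) ^ 2 * (γ : ℂ) ^ 4 - (‖e₁‖ : ℂ) ^ 2))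
    (hN₂ : N₂ = 8 * Real.pi * (lam : ℂ) * (γ : ℂ) ^ 2 *
        ((γ : ℂ) ^ 4 - (‖e₁‖ : ℂ) ^ 2) /
        (4 * (lam : ℂ) ^ 2 * (γ : ℂ) ^ 4 - (‖e₁‖ : ℂ) ^ 2)) :
    (‖N₂‖ ^ 2 - 4 * lam ^ 2 * ‖N₁‖ ^ 2 ≠ 0) ∧
    N₂ ≠ 0 ∧
    ((γ : ℂ) ^ 2 = ((lam : ℂ) * N₂ / (2 * Real.pi)) *
        (((‖N₂‖ ^ 2 - ‖N₁‖ ^ 2 : ℝ) : ℂ) /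
          ((‖N₂‖ ^ 2 - 4 * lam ^ 2 * ‖N₁‖ ^ 2 : ℝ) : ℂ))) ∧
    e₁ = 2 * (lam : ℂ) * (γ : ℂ) ^ 2 * N₁ / N₂ := by
  set a : ℝ := ‖e₁‖ with ha_def
  have ha : 0 ≤ a := norm_nonneg e₁
  have hπ : 0 < Real.pi := Real.pi_pos
  have hπne : Real.pi ≠ 0 := ne_of_gt hπ
  have hlam2 : 1 / 4 < lam ^ 2 := by nlinarith [sq_abs lam, abs_nonneg lam]
  have hlamne : lam ≠ 0 := by intro h; rw [h] at hlam2; norm_num at hlam2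
  have hR : 0 < γ ^ 4 - a ^ 2 := by nlinarith
  have hD : 0 < 4 * lam ^ 2 * γ ^ 4 - a ^ 2 := by nlinarith
  have hRne : γ ^ 4 - a ^ 2 ≠ 0 := ne_of_gt hR
  have hDne : 4 * lam ^ 2 * γ ^ 4 - a ^ 2 ≠ 0 := ne_of_gt hD
  have hDc : (4 * (lam : ℂ) ^ 2 * (γ : ℂ) ^ 4 - (a : ℂ) ^ 2) =
      ((4 * lam ^ 2 * γ ^ 4 - a ^ 2 : ℝ) : ℂ) := by push_cast; ring
  have hRc : ((γ : ℂ) ^ 4 - (a : ℂ) ^ 2) = ((γ ^ 4 - a ^ 2 : ℝ) : ℂ) := by push_cast; ring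
  have hDcne : ((4 * lam ^ 2 * γ ^ 4 - a ^ 2 : ℝ) : ℂ) ≠ 0 := by exact_mod_cast hDne
  set P : ℝ := 4 * Real.pi * (γ ^ 4 - a ^ 2) / (4 * lam ^ 2 * γ ^ 4 - a ^ 2) with hP_def
  set Q : ℝ := 8 * Real.pi * lam * γ ^ 2 * (γ ^ 4 - a ^ 2) / (4 * lam ^ 2 * γ ^ 4 - a ^ 2)
    with hQ_def
  have hPpos : 0 < P := by rw [hP_def]; exact div_pos (by nlinarith) hD
  have hPne : P ≠ 0 := ne_of_gt hPpos
  have hQne : Q ≠ 0 := by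
    rw [hQ_def]
    exact div_ne_zero
      (mul_ne_zero (mul_ne_zero (mul_ne_zero (by positivity) hlamne) (by positivity)) hRne)
      hDne
  have hN₁' : N₁ = e₁ * (P : ℂ) := by
    rw [hN₁, hDc, hRc, hP_def]
    push_cast
    field_simp
  have hN₂' : N₂ = (Q : ℂ) := by
    rw [hN₂, hDc, hRc, hQ_def]
    push_cast
    field_simp
  have hA1 : ‖N₁‖ ^ 2 = a ^ 2 * P ^ 2 := by
    rw [hN₁', norm_mul, Complex.norm_real, Real.norm_eq_abs, mul_pow, ← ha_def, sq_abs]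
  have hA2 : ‖N₂‖ ^ 2 = Q ^ 2 := by
    rw [hN₂', Complex.norm_real, Real.norm_eq_abs, sq_abs]
  have key : Q ^ 2 - 4 * lam ^ 2 * (a ^ 2 * P ^ 2) = 4 * lam ^ 2 * P ^ 2 * (γ ^ 4 - a ^ 2) := by
    rw [hQ_def, hP_def]
    field_simp
    ring
  have hmain : ‖N₂‖ ^ 2 - 4 * lam ^ 2 * ‖N₁‖ ^ 2 ≠ 0 := by
    rw [hA1, hA2, key]
    exact ne_of_gt (mul_pos (mul_pos (by nlinarith : (0:ℝ) < 4 * lam ^ 2)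
      (pow_pos hPpos 2)) hR)
  refine ⟨hmain, ?_, ?_, ?_⟩
  · rw [hN₂']
    exact_mod_cast hQne
  · have hreal : lam * Q / (2 * Real.pi) * ((Q ^ 2 - a ^ 2 * P ^ 2) /
        (Q ^ 2 - 4 * lam ^ 2 * (a ^ 2 * P ^ 2))) = γ ^ 2 := by
      rw [key, hQ_def, hP_def]
      field_simp
      ring_nf
      have hD' : lam ^ 2 * γ ^ 4 * 4 - a ^ 2 ≠ 0 := by linarith
      linear_combination (128:ℝ) * (mul_inv_cancel₀ hD')
    rw [hA1, hA2, hN₂']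
    rw [show ((lam : ℂ) * (Q : ℂ) / (2 * (Real.pi : ℂ))) = ((lam * Q / (2 * Real.pi) : ℝ) : ℂ)
      by push_cast; ring]
    rw [← Complex.ofReal_div, ← Complex.ofReal_mul, ← Complex.ofReal_pow]
    exact_mod_cast hreal.symm
  · have hQP : Q = 2 * lam * γ ^ 2 * P := by
      rw [hQ_def, hP_def]; field_simp; ring
    rw [hN₁', hN₂', eq_div_iff (by exact_mod_cast hQne)]
    rw [hQP]
    push_cast
    ring
end
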